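/- Let K be a number field, p an odd prime, and let (a, b, c) ∈ O_K³ with abc ≠ 0, a^p + b^p = c², and aO_K + bO_K + cO_K = O_K. Let E be the Weierstrass curve Y² = X³ + 4cX² + 4a^p X, with Δ_E = 2^{12}(a²b)^p and c₄ = 2^6(a^p + 4b^p). Then for every prime ideal q of O_K with q ∤ 2, one has v_q(Δ_E) = p·v_q(a²b), so p | v_q(Δ_E); and if moreover q | ab, then v_q(c₄) = 0. -/

import Mathlib

open NumberField IsDedekindDomain

open scoped Classical in
/-- The additive `P`-adic valuation on a number field `K`, normalized so that
`vP P x` is the exponent of `P` in the factorization of `x`, with `vP P 0 = 0`. -/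
noncomputable def vP {K : Type} [Field K] [NumberField K]
    (P : HeightOneSpectrum (𝓞 K)) (x : K) : ℤ :=
  if hx : x = 0 then 0
  else - Multiplicative.toAdd (WithZero.unzero ((P.valuation K).ne_zero_iff.mpr hx))



lemma vP_mul {K : Type} [Field K] [NumberField K] (q : HeightOneSpectrum (𝓞 K))
    {x y : K} (hx : x ≠ 0) (hy : y ≠ 0) : vP q (x * y) = vP q x + vP q y := by
  rw [vP, vP, vP, dif_neg hx, dif_neg hy, dif_neg (mul_ne_zero hx hy)]
  have : WithZero.unzero ((q.valuation K).ne_zero_iff.mpr (mul_ne_zero hx hy)) =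
      WithZero.unzero ((q.valuation K).ne_zero_iff.mpr hx) *
      WithZero.unzero ((q.valuation K).ne_zero_iff.mpr hy) := by
    rw [← WithZero.coe_inj, WithZero.coe_mul, WithZero.coe_unzero, WithZero.coe_unzero,
      WithZero.coe_unzero, map_mul]
  rw [this, toAdd_mul]
  ring

lemma vP_pow {K : Type} [Field K] [NumberField K] (q : HeightOneSpectrum (𝓞 K))
    {x : K} (hx : x ≠ 0) (n : ℕ) : vP q (x ^ n) = n * vP q x := by
  induction n with
  | zero =>
    simp [vP, dif_neg (one_ne_zero (α := K))]
    rfl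
  | succ n ih =>
    rw [pow_succ, vP_mul q (pow_ne_zero n hx) hx, ih]
    push_cast; ring

lemma vP_eq_zero_of_not_mem {K : Type} [Field K] [NumberField K]
    (q : HeightOneSpectrum (𝓞 K)) {y : 𝓞 K} (hy : y ∉ q.asIdeal) :
    vP q (algebraMap (𝓞 K) K y) = 0 := by
  have hy0 : y ≠ 0 := fun h => hy (h ▸ q.asIdeal.zero_mem)
  have hne : (algebraMap (𝓞 K) K y) ≠ 0 := by
    simpa using hy0
  have hval : q.valuation K (algebraMap (𝓞 K) K y) = 1 := by
    rw [q.valuation_of_algebraMap]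
    have h1 : q.intValuation y ≤ 1 := q.intValuation_le_one y
    have h2 : ¬ q.intValuation y < 1 := by
      rw [q.intValuation_lt_one_iff_dvd, Ideal.dvd_span_singleton]
      exact hy
    exact le_antisymm h1 (not_lt.mp h2)
  rw [vP, dif_neg hne]
  have : WithZero.unzero ((q.valuation K).ne_zero_iff.mpr hne) = 1 := by
    have := hval
    rw [← WithZero.coe_unzero ((q.valuation K).ne_zero_iff.mpr hne)] at this
    exact_mod_cast this
  rw [this, toAdd_one, neg_zero]

/-- **Reduction data of the Frey curve `Y² = X³ + 4cX² + 4aᵖX` at odd primes**. Let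
`(a,b,c) ∈ O_K³` with `abc ≠ 0`, `aᵖ + bᵖ = c²` and `aO_K + bO_K + cO_K = O_K`. Then for
every prime ideal `q ∤ 2`, `v_q(Δ_E) = p·v_q(a²b)`, so `p ∣ v_q(Δ_E)`; and if `q ∣ ab`
then `v_q(c₄) = 0`. -/
theorem frey_curve_pp2_valuation_at_odd_primes
    (K : Type) [Field K] [NumberField K]
    (p : ℕ) (hp : p.Prime) (hp2 : p ≠ 2) (a b c : 𝓞 K)
    (habc : a * b * c ≠ 0)
    (hsol : a ^ p + b ^ p = c ^ 2)
    (hcoprime : Ideal.span {a} ⊔ Ideal.span {b} ⊔ Ideal.span {c} = ⊤)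
    (W : WeierstrassCurve (𝓞 K))
    (hW : W = { a₁ := 0, a₂ := 4 * c, a₃ := 0, a₄ := 4 * a ^ p, a₆ := 0 }) :
    ∀ q : HeightOneSpectrum (𝓞 K), (2 : 𝓞 K) ∉ q.asIdeal →
      vP q (algebraMap (𝓞 K) K W.Δ) = p * vP q (algebraMap (𝓞 K) K (a ^ 2 * b)) ∧
      (p : ℤ) ∣ vP q (algebraMap (𝓞 K) K W.Δ) ∧
      (a * b ∈ q.asIdeal → vP q (algebraMap (𝓞 K) K W.c₄) = 0) := by
  intro q hq2
  have ha : a ≠ 0 := fun h => habc (by simp [h])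
  have hb : b ≠ 0 := fun h => habc (by simp [h])
  have hc : c ≠ 0 := fun h => habc (by simp [h])
  have hprime := q.isPrime
  have hΔ : W.Δ = 2 ^ 12 * (a ^ 2 * b) ^ p := by
    subst hW
    simp only [WeierstrassCurve.Δ, WeierstrassCurve.b₂, WeierstrassCurve.b₄,
      WeierstrassCurve.b₆, WeierstrassCurve.b₈]
    linear_combination (-4096 : 𝓞 K) * (a ^ p) ^ 2 * hsol
  have hc4 : W.c₄ = 2 ^ 6 * (a ^ p + 4 * b ^ p) := by
    subst hW
    simp only [WeierstrassCurve.c₄, WeierstrassCurve.b₂, WeierstrassCurve.b₄]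
    linear_combination (-256 : 𝓞 K) * hsol
  have hpow2 : ∀ n : ℕ, 0 < n → (2 : 𝓞 K) ^ n ∉ q.asIdeal := by
    intro n hn h
    exact hq2 (hprime.mem_of_pow_mem n h)
  have ha2b : a ^ 2 * b ≠ 0 := mul_ne_zero (pow_ne_zero 2 ha) hb
  have ha2bK : (algebraMap (𝓞 K) K) (a ^ 2 * b) ≠ 0 := by simpa using ha2b
  -- valuation of Δ
  have hΔval : vP q (algebraMap (𝓞 K) K W.Δ) = p * vP q (algebraMap (𝓞 K) K (a ^ 2 * b)) := by
    have h1 : (algebraMap (𝓞 K) K) (2 ^ 12) ≠ 0 := by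
      simpa using (pow_ne_zero 12 (two_ne_zero (α := 𝓞 K)))
    have h2 : (algebraMap (𝓞 K) K) ((a ^ 2 * b) ^ p) ≠ 0 := by
      simpa using pow_ne_zero p ha2b
    rw [hΔ, map_mul, vP_mul q h1 h2, vP_eq_zero_of_not_mem q (hpow2 12 (by norm_num)),
      zero_add, map_pow, vP_pow q ha2bK p]
  refine ⟨hΔval, ⟨_, hΔval⟩, ?_⟩
  -- c₄ part
  intro hab
  have hp0 : 0 < p := hp.pos
  have hnotboth : ¬ (a ∈ q.asIdeal ∧ b ∈ q.asIdeal) := by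
    rintro ⟨haq, hbq⟩
    have hcq : c ∈ q.asIdeal := by
      have : c ^ 2 ∈ q.asIdeal := by
        rw [← hsol]
        exact Ideal.add_mem _ (Ideal.pow_mem_of_mem _ haq p hp0)
          (Ideal.pow_mem_of_mem _ hbq p hp0)
      exact hprime.mem_of_pow_mem 2 this
    apply hprime.ne_top
    rw [← top_le_iff, ← hcoprime]
    refine sup_le (sup_le ?_ ?_) ?_ <;>
      rw [Ideal.span_le, Set.singleton_subset_iff] <;> assumption
  have hkey : a ^ p + 4 * b ^ p ∉ q.asIdeal := by
    intro hmem
    rcases hprime.mem_or_mem hab with haq | hbq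
    · have hbq : b ∉ q.asIdeal := fun h => hnotboth ⟨haq, h⟩
      have h4b : 4 * b ^ p ∈ q.asIdeal := by
        have : a ^ p + 4 * b ^ p - a ^ p ∈ q.asIdeal :=
          Ideal.sub_mem _ hmem (Ideal.pow_mem_of_mem _ haq p hp0)
        simpa using this
      rcases hprime.mem_or_mem h4b with h4 | hbp
      · exact hpow2 2 (by norm_num) (by simpa [show (4 : 𝓞 K) = 2 ^ 2 by norm_num] using h4)
      · exact hbq (hprime.mem_of_pow_mem p hbp)
    · have haq : a ∉ q.asIdeal := fun h => hnotboth ⟨h, hbq⟩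
      have hap : a ^ p ∈ q.asIdeal := by
        have : a ^ p + 4 * b ^ p - 4 * b ^ p ∈ q.asIdeal :=
          Ideal.sub_mem _ hmem (Ideal.mul_mem_left _ 4 (Ideal.pow_mem_of_mem _ hbq p hp0))
        simpa using this
      exact haq (hprime.mem_of_pow_mem p hap)
  have hc4mem : W.c₄ ∉ q.asIdeal := by
    rw [hc4]
    intro h
    rcases hprime.mem_or_mem h with h1 | h2
    · exact hpow2 6 (by norm_num) h1
    · exact hkey h2
  exact vP_eq_zero_of_not_mem q hc4mem
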